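/- Let n ≥ 2 and fix a 2-block set partition 𝔅 = {B_1, B_2} of [n]. For every index tree T of order n, among the contractions of the three types P, Q1, Q2 (defined below) having T as source or target, exactly one preserves the invariant ψ = (ψ_1,...,ψ_5). In particular, the set of index trees of order n is partitioned into pairs {T, T'} with T → T' a ψ-preserving contraction. -/

import Mathlib

/-- The binary weight of `A ⊆ [n]`; the reverse binary order compares these weights
in reverse, so the maximal element in reverse binary order has minimal weight. -/
def bval {n : ℕ} (A : Finset (Fin n)) : ℕ := ∑ i ∈ A, 2 ^ (i : ℕ)

/-- Index trees of order `n`, identified with their families of node labels: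
laminar families of nonempty subsets of `[n]` containing `[n]` in which every member
is minimal or the union of its proper subsets in the family. -/
def IsIndexFam (n : ℕ) (S : Finset (Finset (Fin n))) : Prop :=
  (Finset.univ : Finset (Fin n)) ∈ S ∧ (∀ A ∈ S, A.Nonempty) ∧
  (∀ A ∈ S, ∀ B ∈ S, A ∩ B = ∅ ∨ A ⊆ B ∨ B ⊆ A) ∧
  ∀ A ∈ S, (∀ B ∈ S, ¬ B ⊂ A) ∨ ∀ x : Fin n, x ∈ A ↔ ∃ B ∈ S, B ⊂ A ∧ x ∈ B

/-- `Q(T)`: the node labels contained in neither `B₁` nor `B₂`. -/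
def Qset {n : ℕ} (B₁ B₂ : Finset (Fin n)) (S : Finset (Finset (Fin n))) :
    Finset (Finset (Fin n)) :=
  S.filter fun A => ¬ A ⊆ B₁ ∧ ¬ A ⊆ B₂

/-- `L_{d(T)}`: the maximal element of `Q(T)` with respect to the reverse binary
order, i.e. the member of `Q(T)` of minimal binary weight. -/
noncomputable def dLabel {n : ℕ} (B₁ B₂ : Finset (Fin n))
    (S : Finset (Finset (Fin n))) : Finset (Fin n) :=
  if h : (Qset B₁ B₂ S).Nonempty then
    (Finset.exists_min_image (Qset B₁ B₂ S) bval h).choose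
  else ∅

/-- The invariant `ψ(T) = (ψ₁,…,ψ₅)`: writing `D = L_{d(T)}`, it records `D`, the
number of nodes not weakly below `d(T)`, the number of `v ≻ d(T)` with
`L_v ⊊ B₁ ∩ D`, the product of the latter with the number of `v ≻ d(T)` with
`L_v ⊆ B₂ ∩ D`, and the number of `v ≻ d(T)` with `L_v ⊊ B₂ ∩ D`.  (Only equality
of `ψ`-values is used below, so no order on the tuples is needed.) -/
noncomputable def psiInv {n : ℕ} (B₁ B₂ : Finset (Fin n))
    (S : Finset (Finset (Fin n))) : Finset (Fin n) × ℕ × ℕ × ℕ × ℕ :=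
  let D := dLabel B₁ B₂ S
  (D,
   (S.filter fun A => ¬ A ⊆ D).card,
   (S.filter fun A => A ⊂ B₁ ∩ D).card,
   (S.filter fun A => A ⊂ B₁ ∩ D).card * (S.filter fun A => A ⊆ B₂ ∩ D).card,
   (S.filter fun A => A ⊂ B₂ ∩ D).card)

/-- `A` is an internal-node label of the family `S`. -/
def IsInternal {n : ℕ} (S : Finset (Finset (Fin n))) (A : Finset (Fin n)) : Prop :=
  A ∈ S ∧ ∃ B ∈ S, B ⊂ A

/-- Ordinary contraction at the non-root internal node labeled `A`: remove `A`. -/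
def OrdCon {n : ℕ} (S S' : Finset (Finset (Fin n))) (A : Finset (Fin n)) : Prop :=
  IsInternal S A ∧ A ≠ Finset.univ ∧ S' = S.erase A

/-- Exceptional contraction at the internal node labeled `A`, all of whose children
are leaves: remove all proper subsets of `A`. -/
def ExcCon {n : ℕ} (S S' : Finset (Finset (Fin n))) (A : Finset (Fin n)) : Prop :=
  IsInternal S A ∧ (∀ B ∈ S, B ⊂ A → ¬ IsInternal S B) ∧
    S' = S.filter fun B => ¬ B ⊂ A

/-- Type `P`: exceptional contraction at `d(T)`, which has exactly two children,
labeled `B₁ ∩ L_{d(T)}` and `B₂ ∩ L_{d(T)}`. -/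
def TypeP {n : ℕ} (B₁ B₂ : Finset (Fin n)) (S S' : Finset (Finset (Fin n))) : Prop :=
  ExcCon S S' (dLabel B₁ B₂ S) ∧
    S.filter (fun B => B ⊂ dLabel B₁ B₂ S) =
      {B₁ ∩ dLabel B₁ B₂ S, B₂ ∩ dLabel B₁ B₂ S}

/-- Type `Q1`: ordinary contraction at a node labeled `B₁ ∩ L_{d(T)}`. -/
def TypeQ1 {n : ℕ} (B₁ B₂ : Finset (Fin n)) (S S' : Finset (Finset (Fin n))) : Prop :=
  OrdCon S S' (B₁ ∩ dLabel B₁ B₂ S)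

/-- Type `Q2`: ordinary contraction at a node labeled `B₂ ∩ L_{d(T)}`. -/
def TypeQ2 {n : ℕ} (B₁ B₂ : Finset (Fin n)) (S S' : Finset (Finset (Fin n))) : Prop :=
  OrdCon S S' (B₂ ∩ dLabel B₁ B₂ S)

/-- A contraction of one of the three types `P`, `Q1`, `Q2`. -/
def TypedCon {n : ℕ} (B₁ B₂ : Finset (Fin n)) (S S' : Finset (Finset (Fin n))) : Prop :=
  TypeP B₁ B₂ S S' ∨ TypeQ1 B₁ B₂ S S' ∨ TypeQ2 B₁ B₂ S S'

section helpers
variable {n : ℕ}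

lemma bval_lt_of_ssubset {A B : Finset (Fin n)} (h : A ⊂ B) : bval A < bval B := by
  obtain ⟨x, hxB, hxA⟩ := Finset.exists_of_ssubset h
  exact Finset.sum_lt_sum_of_subset h.1 hxB hxA (Nat.pow_pos (by norm_num))
    (fun j _ _ => Nat.zero_le _)

lemma dLabel_spec {B₁ B₂ : Finset (Fin n)} {S : Finset (Finset (Fin n))}
    (h : (Qset B₁ B₂ S).Nonempty) :
    dLabel B₁ B₂ S ∈ Qset B₁ B₂ S ∧
      ∀ A ∈ Qset B₁ B₂ S, bval (dLabel B₁ B₂ S) ≤ bval A := by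
  have := (Finset.exists_min_image (Qset B₁ B₂ S) bval h).choose_spec
  rw [dLabel, dif_pos h]
  exact this

lemma dLabel_congr {B₁ B₂ : Finset (Fin n)} {S S' : Finset (Finset (Fin n))}
    (h : Qset B₁ B₂ S = Qset B₁ B₂ S') : dLabel B₁ B₂ S = dLabel B₁ B₂ S' := by
  simp only [dLabel, h]

/-- Ordinary contraction preserves the index-family property. -/
lemma isIndexFam_erase {S : Finset (Finset (Fin n))} (hS : IsIndexFam n S)
    {C : Finset (Fin n)} (hCS : C ∈ S) (hint : ∃ B ∈ S, B ⊂ C) (hCu : C ≠ Finset.univ) :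
    IsIndexFam n (S.erase C) := by
  obtain ⟨huniv, hne, hlam, hcond⟩ := hS
  have hCun : ∀ x : Fin n, x ∈ C ↔ ∃ B ∈ S, B ⊂ C ∧ x ∈ B := by
    rcases hcond C hCS with h | h
    · obtain ⟨B, hB, hBC⟩ := hint; exact absurd hBC (h B hB)
    · exact h
  refine ⟨Finset.mem_erase.mpr ⟨fun h => hCu h.symm, huniv⟩,
    fun A hA => hne A (Finset.mem_of_mem_erase hA),
    fun A hA B hB => hlam A (Finset.mem_of_mem_erase hA) B (Finset.mem_of_mem_erase hB),
    fun A hA => ?_⟩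
  have hAS := Finset.mem_of_mem_erase hA
  rcases hcond A hAS with h | h
  · exact Or.inl fun B hB => h B (Finset.mem_of_mem_erase hB)
  · refine Or.inr fun x => ⟨fun hx => ?_, fun ⟨B, hB, hBA, hxB⟩ => ?_⟩
    · obtain ⟨B, hB, hBA, hxB⟩ := (h x).mp hx
      by_cases hBC : B = C
      · subst hBC
        obtain ⟨B', hB', hB'C, hxB'⟩ := (hCun x).mp hxB
        exact ⟨B', Finset.mem_erase.mpr ⟨hB'C.ne, hB'⟩, hB'C.trans hBA, hxB'⟩
      · exact ⟨B, Finset.mem_erase.mpr ⟨hBC, hB⟩, hBA, hxB⟩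
    · exact hBA.1 hxB

/-- Inserting a node preserves the index-family property, under suitable hypotheses. -/
lemma isIndexFam_insert {S : Finset (Finset (Fin n))} (hS : IsIndexFam n S)
    {C : Finset (Fin n)} (hCne : C.Nonempty)
    (hlamC : ∀ A ∈ S, A ∩ C = ∅ ∨ A ⊆ C ∨ C ⊆ A)
    (hCun : (∀ B ∈ S, ¬ B ⊂ C) ∨ ∀ x ∈ C, ∃ B ∈ S, B ⊂ C ∧ x ∈ B)
    (hup : ∀ A ∈ S, C ⊂ A → ∀ x : Fin n, x ∈ A ↔ ∃ B ∈ S, B ⊂ A ∧ x ∈ B) :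
    IsIndexFam n (insert C S) := by
  obtain ⟨huniv, hne, hlam, hcond⟩ := hS
  refine ⟨Finset.mem_insert_of_mem huniv, ?_, ?_, ?_⟩
  · intro A hA
    rcases Finset.mem_insert.mp hA with h | h
    · exact h ▸ hCne
    · exact hne A h
  · intro A hA B hB
    rcases Finset.mem_insert.mp hA with h | h <;> rcases Finset.mem_insert.mp hB with h' | h'
    · subst h; subst h'; exact Or.inr (Or.inl le_rfl)
    · subst h
      rcases hlamC B h' with hc | hc | hc
      · exact Or.inl (by rwa [Finset.inter_comm])
      · exact Or.inr (Or.inr hc)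
      · exact Or.inr (Or.inl hc)
    · subst h'; exact hlamC A h
    · exact hlam A h B h'
  · intro A hA
    rcases Finset.mem_insert.mp hA with h | h
    · subst h
      rcases hCun with h | h
      · refine Or.inl fun B hB => ?_
        rcases Finset.mem_insert.mp hB with h' | h'
        · subst h'; exact fun hc => hc.2 le_rfl
        · exact h B h'
      · refine Or.inr fun x => ⟨fun hx => ?_, fun ⟨B, hB, hBA, hxB⟩ => hBA.1 hxB⟩
        obtain ⟨B, hB, hBC, hxB⟩ := h x hx
        exact ⟨B, Finset.mem_insert_of_mem hB, hBC, hxB⟩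
    · by_cases hCA : C ⊂ A
      · refine Or.inr fun x => ⟨fun hx => ?_, fun ⟨B, hB, hBA, hxB⟩ => hBA.1 hxB⟩
        obtain ⟨B, hB, hBA, hxB⟩ := (hup A h hCA x).mp hx
        exact ⟨B, Finset.mem_insert_of_mem hB, hBA, hxB⟩
      · rcases hcond A h with h' | h'
        · refine Or.inl fun B hB => ?_
          rcases Finset.mem_insert.mp hB with h'' | h''
          · subst h''; exact hCA
          · exact h' B h''
        · refine Or.inr fun x => ⟨fun hx => ?_, fun ⟨B, hB, hBA, hxB⟩ => hBA.1 hxB⟩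
          obtain ⟨B, hB, hBA, hxB⟩ := (h' x).mp hx
          exact ⟨B, Finset.mem_insert_of_mem hB, hBA, hxB⟩



/-- Removing all proper subsets of a member preserves the index-family property. -/
lemma isIndexFam_filter_not_ssubset {S : Finset (Finset (Fin n))} (hS : IsIndexFam n S)
    {D : Finset (Fin n)} (hD : D ∈ S) :
    IsIndexFam n (S.filter fun B => ¬ B ⊂ D) := by
  obtain ⟨huniv, hne, hlam, hcond⟩ := hS
  have hmem : ∀ {A}, A ∈ S.filter (fun B => ¬ B ⊂ D) ↔ A ∈ S ∧ ¬ A ⊂ D := by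
    intro A; simp [Finset.mem_filter]
  refine ⟨hmem.mpr ⟨huniv, fun h => h.2 (Finset.subset_univ D)⟩,
    fun A hA => hne A (hmem.mp hA).1,
    fun A hA B hB => hlam A (hmem.mp hA).1 B (hmem.mp hB).1, ?_⟩
  intro A hA
  obtain ⟨hAS, hAD⟩ := hmem.mp hA
  by_cases hADeq : A = D
  · subst hADeq
    exact Or.inl fun B hB => (hmem.mp hB).2
  · rcases hcond A hAS with h | h
    · exact Or.inl fun B hB => h B (hmem.mp hB).1
    · refine Or.inr fun x => ⟨fun hx => ?_, fun ⟨B, hB, hBA, hxB⟩ => hBA.1 hxB⟩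
      obtain ⟨B, hB, hBA, hxB⟩ := (h x).mp hx
      by_cases hBD : B ⊂ D
      · -- replace witness by D
        have hDA : D ⊂ A := by
          rcases hlam A hAS D hD with hc | hc | hc
          · exfalso
            have : x ∈ A ∩ D := Finset.mem_inter.mpr ⟨hBA.1 hxB, hBD.1 hxB⟩
            rw [hc] at this; exact absurd this (Finset.notMem_empty x)
          · exact absurd (lt_of_le_of_ne hc hADeq) hAD
          · exact lt_of_le_of_ne hc (fun h' => hADeq h'.symm)
        exact ⟨D, hmem.mpr ⟨hD, fun h' => h'.2 le_rfl⟩, hDA, hBD.1 hxB⟩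
      · exact ⟨B, hmem.mpr ⟨(‹B ∈ S› : B ∈ S), hBD⟩, hBA, hxB⟩

/-- Reverse exceptional contraction: adding the two children back. -/
lemma isIndexFam_Prev {S : Finset (Finset (Fin n))} (hS : IsIndexFam n S)
    {D C₁ C₂ : Finset (Fin n)} (hD : D ∈ S)
    (hlamD : ∀ A ∈ S, A ∩ D = ∅ ∨ A ⊆ D ∨ D ⊆ A)
    (hempty : ∀ B ∈ S, ¬ B ⊂ D)
    (h1 : C₁.Nonempty) (h2 : C₂.Nonempty) (h1D : C₁ ⊂ D) (h2D : C₂ ⊂ D)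
    (hdisC : C₁ ∩ C₂ = ∅) (hunC : C₁ ∪ C₂ = D) :
    IsIndexFam n (insert C₁ (insert C₂ S)) := by
  obtain ⟨huniv, hne, hlam, hcond⟩ := hS
  have hnotsub12 : ¬ C₁ ⊆ C₂ := fun h => by
    obtain ⟨x, hx⟩ := h1
    have : x ∈ C₁ ∩ C₂ := Finset.mem_inter.mpr ⟨hx, h hx⟩
    rw [hdisC] at this; exact absurd this (Finset.notMem_empty x)
  have hnotsub21 : ¬ C₂ ⊆ C₁ := fun h => by
    obtain ⟨x, hx⟩ := h2
    have : x ∈ C₁ ∩ C₂ := Finset.mem_inter.mpr ⟨h hx, hx⟩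
    rw [hdisC] at this; exact absurd this (Finset.notMem_empty x)
  have hmem : ∀ {A}, A ∈ insert C₁ (insert C₂ S) ↔ A = C₁ ∨ A = C₂ ∨ A ∈ S := by
    intro A; simp [Finset.mem_insert]
  -- laminarity of a new set against an old set
  have hlamnew : ∀ C : Finset (Fin n), C ⊆ D → ∀ A ∈ S, A ∩ C = ∅ ∨ A ⊆ C ∨ C ⊆ A := by
    intro C hCD A hA
    rcases hlamD A hA with hc | hc | hc
    · refine Or.inl (Finset.subset_empty.mp ?_)
      exact hc ▸ Finset.inter_subset_inter le_rfl hCD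
    · rcases eq_or_lt_of_le hc with hc' | hc'
      · exact Or.inr (Or.inr (hc' ▸ hCD))
      · exact absurd hc' (hempty A hA)
    · exact Or.inr (Or.inr (hCD.trans hc))
  -- nothing in the new family is strictly inside C₁ or C₂
  have hmin1 : ∀ B, B ∈ insert C₁ (insert C₂ S) → ¬ B ⊂ C₁ := by
    intro B hB hBC
    rcases hmem.mp hB with h | h | h
    · exact (ssubset_irrefl _) (h ▸ hBC)
    · exact hnotsub21 (h ▸ hBC.1)
    · exact hempty B h (hBC.trans h1D)
  have hmin2 : ∀ B, B ∈ insert C₁ (insert C₂ S) → ¬ B ⊂ C₂ := by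
    intro B hB hBC
    rcases hmem.mp hB with h | h | h
    · exact hnotsub12 (h ▸ hBC.1)
    · exact (ssubset_irrefl _) (h ▸ hBC)
    · exact hempty B h (hBC.trans h2D)
  refine ⟨hmem.mpr (Or.inr (Or.inr huniv)), ?_, ?_, ?_⟩
  · intro A hA
    rcases hmem.mp hA with h | h | h
    · exact h ▸ h1
    · exact h ▸ h2
    · exact hne A h
  · intro A hA B hB
    rcases hmem.mp hA with h | h | h <;> rcases hmem.mp hB with h' | h' | h'
    · exact h ▸ h' ▸ Or.inr (Or.inl le_rfl)
    · exact Or.inl (h ▸ h' ▸ hdisC)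
    · rw [h]
      rcases hlamnew C₁ h1D.1 B h' with hc | hc | hc
      · exact Or.inl (by rwa [Finset.inter_comm])
      · exact Or.inr (Or.inr hc)
      · exact Or.inr (Or.inl hc)
    · exact Or.inl (h ▸ h' ▸ (by rwa [Finset.inter_comm] at hdisC))
    · exact h ▸ h' ▸ Or.inr (Or.inl le_rfl)
    · rw [h]
      rcases hlamnew C₂ h2D.1 B h' with hc | hc | hc
      · exact Or.inl (by rwa [Finset.inter_comm])
      · exact Or.inr (Or.inr hc)
      · exact Or.inr (Or.inl hc)
    · exact h' ▸ hlamnew C₁ h1D.1 A h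
    · exact h' ▸ hlamnew C₂ h2D.1 A h
    · exact hlam A h B h'
  · intro A hA
    rcases hmem.mp hA with h | h | h
    · exact Or.inl fun B hB hBC => hmin1 B hB (h ▸ hBC)
    · exact Or.inl fun B hB hBC => hmin2 B hB (h ▸ hBC)
    · by_cases hADeq : A = D
      · subst hADeq
        refine Or.inr fun x => ⟨fun hx => ?_, fun ⟨B, hB, hBA, hxB⟩ => hBA.1 hxB⟩
        have hx' : x ∈ C₁ ∪ C₂ := hunC ▸ hx
        rcases Finset.mem_union.mp hx' with hx1 | hx2
        · exact ⟨C₁, hmem.mpr (Or.inl rfl), h1D, hx1⟩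
        · exact ⟨C₂, hmem.mpr (Or.inr (Or.inl rfl)), h2D, hx2⟩
      · rcases hcond A h with h' | h'
        · refine Or.inl fun B hB hBA => ?_
          rcases hmem.mp hB with hc | hc | hc
          · -- C₁ ⊂ A forces D ⊂ A, contradicting minimality of A
            subst hc
            rcases hlamD A h with hd | hd | hd
            · obtain ⟨x, hx⟩ := h1
              have : x ∈ A ∩ D := Finset.mem_inter.mpr ⟨hBA.1 hx, h1D.1 hx⟩
              rw [hd] at this; exact absurd this (Finset.notMem_empty x)
            · rcases eq_or_lt_of_le hd with hd' | hd'
              · exact hADeq hd'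
              · exact hempty A h hd'
            · exact h' D hD (lt_of_le_of_ne hd (fun he => hADeq he.symm) |>.trans_le le_rfl)
          · subst hc
            rcases hlamD A h with hd | hd | hd
            · obtain ⟨x, hx⟩ := h2
              have : x ∈ A ∩ D := Finset.mem_inter.mpr ⟨hBA.1 hx, h2D.1 hx⟩
              rw [hd] at this; exact absurd this (Finset.notMem_empty x)
            · rcases eq_or_lt_of_le hd with hd' | hd'
              · exact hADeq hd'
              · exact hempty A h hd'
            · exact h' D hD (lt_of_le_of_ne hd (fun he => hADeq he.symm))
          · exact h' B hc hBA
        · refine Or.inr fun x => ⟨fun hx => ?_, fun ⟨B, hB, hBA, hxB⟩ => hBA.1 hxB⟩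
          obtain ⟨B, hB, hBA, hxB⟩ := (h' x).mp hx
          exact ⟨B, hmem.mpr (Or.inr (Or.inr hB)), hBA, hxB⟩
end helpers

section helpers2
variable {n : ℕ}

lemma filter_erase_eq {α : Type*} [DecidableEq α] (S : Finset α) (C : α)
    (p : α → Prop) [DecidablePred p] (h : ¬ p C) :
    (S.erase C).filter p = S.filter p := by
  rw [Finset.filter_erase, Finset.erase_eq_of_notMem (by simp [h])]

lemma filter_insert_eq {α : Type*} [DecidableEq α] (S : Finset α) (C : α)
    (p : α → Prop) [DecidablePred p] (h : ¬ p C) :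
    (insert C S).filter p = S.filter p := by
  rw [Finset.filter_insert, if_neg h]

lemma card_filter_insert {α : Type*} [DecidableEq α] (S : Finset α) (C : α)
    (p : α → Prop) [DecidablePred p] (hC : C ∉ S) (h : p C) :
    ((insert C S).filter p).card = (S.filter p).card + 1 := by
  rw [Finset.filter_insert, if_pos h, Finset.card_insert_of_notMem (by simp [hC])]

lemma card_filter_erase {α : Type*} [DecidableEq α] (S : Finset α) (C : α)
    (p : α → Prop) [DecidablePred p] (hC : C ∈ S) (h : p C) :
    ((S.erase C).filter p).card + 1 = (S.filter p).card := by
  rw [Finset.filter_erase]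
  rw [Finset.card_erase_add_one (Finset.mem_filter.mpr ⟨hC, h⟩)]

lemma psiInv_eq {B₁ B₂ : Finset (Fin n)} {S S' : Finset (Finset (Fin n))}
    (hd : dLabel B₁ B₂ S = dLabel B₁ B₂ S')
    (h2 : (S.filter fun A => ¬ A ⊆ dLabel B₁ B₂ S).card
        = (S'.filter fun A => ¬ A ⊆ dLabel B₁ B₂ S).card)
    (h3 : (S.filter fun A => A ⊂ B₁ ∩ dLabel B₁ B₂ S).card
        = (S'.filter fun A => A ⊂ B₁ ∩ dLabel B₁ B₂ S).card)
    (h4 : (S.filter fun A => A ⊂ B₁ ∩ dLabel B₁ B₂ S).card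
            * (S.filter fun A => A ⊆ B₂ ∩ dLabel B₁ B₂ S).card
        = (S'.filter fun A => A ⊂ B₁ ∩ dLabel B₁ B₂ S).card
            * (S'.filter fun A => A ⊆ B₂ ∩ dLabel B₁ B₂ S).card)
    (h5 : (S.filter fun A => A ⊂ B₂ ∩ dLabel B₁ B₂ S).card
        = (S'.filter fun A => A ⊂ B₂ ∩ dLabel B₁ B₂ S).card) :
    psiInv B₁ B₂ S = psiInv B₁ B₂ S' := by
  simp only [psiInv, ← hd]
  rw [h2, h4, h3, h5]

lemma psiInv_comp4 {B₁ B₂ : Finset (Fin n)} {S S' : Finset (Finset (Fin n))}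
    (h : psiInv B₁ B₂ S = psiInv B₁ B₂ S') :
    (S.filter fun A => A ⊂ B₁ ∩ dLabel B₁ B₂ S).card
      * (S.filter fun A => A ⊆ B₂ ∩ dLabel B₁ B₂ S).card
  = (S'.filter fun A => A ⊂ B₁ ∩ dLabel B₁ B₂ S').card
      * (S'.filter fun A => A ⊆ B₂ ∩ dLabel B₁ B₂ S').card := by
  have := congrArg (fun t : Finset (Fin n) × ℕ × ℕ × ℕ × ℕ => t.2.2.2.1) h
  simpa [psiInv] using this

end helpers2
/-- Fix a 2-block set partition `{B₁, B₂}` of `[n]` (`n ≥ 2`).  For every index tree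
`T` of order `n` (identified with its label family `S`), among the contractions of
types `P`, `Q1`, `Q2` having `T` as source or target, exactly one preserves the
invariant `ψ`.  (The pair is recorded as a direction `Bool` together with the other
tree; in particular index trees are partitioned into pairs `{T, T'}` with `T → T'` a
`ψ`-preserving contraction.) -/
theorem stmt19 (n : ℕ) (hn : 2 ≤ n) (B₁ B₂ : Finset (Fin n))
    (hB₁ : B₁.Nonempty) (hB₂ : B₂.Nonempty) (hdisj : B₁ ∩ B₂ = ∅)
    (hcover : B₁ ∪ B₂ = Finset.univ)
    (S : Finset (Finset (Fin n))) (hS : IsIndexFam n S) :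
    ∃! p : Bool × Finset (Finset (Fin n)),
      if p.1 = true then
        TypedCon B₁ B₂ S p.2 ∧ IsIndexFam n p.2 ∧ psiInv B₁ B₂ S = psiInv B₁ B₂ p.2
      else
        TypedCon B₁ B₂ p.2 S ∧ IsIndexFam n p.2 ∧ psiInv B₁ B₂ p.2 = psiInv B₁ B₂ S := by
  classical
  obtain ⟨huniv, hne, hlam, hcond⟩ := id hS
  have hdisj' : ∀ x : Fin n, x ∈ B₁ → x ∈ B₂ → False := fun x h1 h2 =>
    Finset.eq_empty_iff_forall_notMem.mp hdisj x (Finset.mem_inter.mpr ⟨h1, h2⟩)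
  have hQne : (Qset B₁ B₂ S).Nonempty := by
    refine ⟨Finset.univ, Finset.mem_filter.mpr ⟨huniv, ?_, ?_⟩⟩
    · intro h
      obtain ⟨x, hx⟩ := hB₂
      exact hdisj' x (h (Finset.mem_univ x)) hx
    · intro h
      obtain ⟨x, hx⟩ := hB₁
      exact hdisj' x hx (h (Finset.mem_univ x))
  obtain ⟨hDQ, hDmin⟩ := dLabel_spec hQne
  set D := dLabel B₁ B₂ S with hDdef
  have hDS : D ∈ S := (Finset.mem_filter.mp hDQ).1
  have hDB1 : ¬ D ⊆ B₁ := (Finset.mem_filter.mp hDQ).2.1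
  have hDB2 : ¬ D ⊆ B₂ := (Finset.mem_filter.mp hDQ).2.2
  set C₁ := B₁ ∩ D with hC1def
  set C₂ := B₂ ∩ D with hC2def
  have hC1B : C₁ ⊆ B₁ := Finset.inter_subset_left
  have hC2B : C₂ ⊆ B₂ := Finset.inter_subset_left
  have hC1sD : C₁ ⊆ D := Finset.inter_subset_right
  have hC2sD : C₂ ⊆ D := Finset.inter_subset_right
  have hdisC : ∀ x : Fin n, x ∈ C₁ → x ∈ C₂ → False := fun x h1 h2 =>
    hdisj' x (hC1B h1) (hC2B h2)
  have hunC : ∀ x : Fin n, x ∈ D → x ∈ C₁ ∨ x ∈ C₂ := by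
    intro x hx
    have hxu : x ∈ B₁ ∪ B₂ := hcover ▸ Finset.mem_univ x
    rcases Finset.mem_union.mp hxu with h | h
    · exact Or.inl (Finset.mem_inter.mpr ⟨h, hx⟩)
    · exact Or.inr (Finset.mem_inter.mpr ⟨h, hx⟩)
  have h1ne : C₁.Nonempty := by
    rw [Finset.nonempty_iff_ne_empty]
    intro h
    apply hDB2
    intro x hx
    rcases hunC x hx with h1 | h2
    · rw [h] at h1; exact absurd h1 (Finset.notMem_empty x)
    · exact hC2B h2
  have h2ne : C₂.Nonempty := by
    rw [Finset.nonempty_iff_ne_empty]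
    intro h
    apply hDB1
    intro x hx
    rcases hunC x hx with h1 | h2
    · exact hC1B h1
    · rw [h] at h2; exact absurd h2 (Finset.notMem_empty x)
  have hns12 : ¬ C₁ ⊆ C₂ := fun h => by
    obtain ⟨x, hx⟩ := h1ne; exact hdisC x hx (h hx)
  have hns21 : ¬ C₂ ⊆ C₁ := fun h => by
    obtain ⟨x, hx⟩ := h2ne; exact hdisC x (h hx) hx
  have hC1D : C₁ ⊂ D := by
    rw [Finset.ssubset_def]
    exact ⟨hC1sD, fun h => hDB1 fun x hx => (Finset.mem_inter.mp (h hx)).1⟩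
  have hC2D : C₂ ⊂ D := by
    rw [Finset.ssubset_def]
    exact ⟨hC2sD, fun h => hDB2 fun x hx => (Finset.mem_inter.mp (h hx)).1⟩
  have hC1u : C₁ ≠ Finset.univ := fun h => hns21 (h ▸ Finset.subset_univ C₂)
  have hC2u : C₂ ≠ Finset.univ := fun h => hns12 (h ▸ Finset.subset_univ C₁)
  have hC1C2 : C₁ ≠ C₂ := fun h => hns12 (h ▸ le_rfl)
  have hsplit : ∀ A ∈ S, A ⊂ D → A ⊆ C₁ ∨ A ⊆ C₂ := by
    intro A hA hAD
    have hb : bval A < bval D := bval_lt_of_ssubset hAD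
    have hAB : A ⊆ B₁ ∨ A ⊆ B₂ := by
      by_contra hc
      push_neg at hc
      exact absurd (hDmin A (Finset.mem_filter.mpr ⟨hA, hc.1, hc.2⟩)) (not_le.mpr hb)
    rcases hAB with h | h
    · exact Or.inl (Finset.subset_inter h hAD.1)
    · exact Or.inr (Finset.subset_inter h hAD.1)
  have hcov : (∃ B ∈ S, B ⊂ D) →
      (∀ x ∈ C₁, ∃ B ∈ S, B ⊆ C₁ ∧ x ∈ B) ∧ (∀ x ∈ C₂, ∃ B ∈ S, B ⊆ C₂ ∧ x ∈ B) := by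
    intro hint
    have hDun : ∀ x : Fin n, x ∈ D ↔ ∃ B ∈ S, B ⊂ D ∧ x ∈ B := by
      rcases hcond D hDS with h | h
      · obtain ⟨B, hB, hBD⟩ := hint; exact absurd hBD (h B hB)
      · exact h
    constructor <;> intro x hx
    · obtain ⟨B, hB, hBD, hxB⟩ := (hDun x).mp (hC1sD hx)
      rcases hsplit B hB hBD with h | h
      · exact ⟨B, hB, h, hxB⟩
      · exact absurd (h hxB) fun hc => hdisC x hx hc
    · obtain ⟨B, hB, hBD, hxB⟩ := (hDun x).mp (hC2sD hx)
      rcases hsplit B hB hBD with h | h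
      · exact absurd (h hxB) fun hc => hdisC x hc hx
      · exact ⟨B, hB, h, hxB⟩
  have hQgen : ∀ (T : Finset (Finset (Fin n))) (C : Finset (Fin n)), (C ⊆ B₁ ∨ C ⊆ B₂) →
      Qset B₁ B₂ (insert C T) = Qset B₁ B₂ T := by
    intro T C hC
    rw [Qset, Qset, Finset.filter_insert, if_neg]
    intro hc
    rcases hC with h | h
    · exact hc.1 h
    · exact hc.2 h
  have hQer : ∀ C : Finset (Fin n), (C ⊆ B₁ ∨ C ⊆ B₂) →
      Qset B₁ B₂ (S.erase C) = Qset B₁ B₂ S := by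
    intro C hC
    rw [Qset, Qset, Finset.filter_erase, Finset.erase_eq_of_notMem]
    intro hc
    rw [Finset.mem_filter] at hc
    rcases hC with h | h
    · exact hc.2.1 h
    · exact hc.2.2 h
  have hQfil : Qset B₁ B₂ (S.filter fun B => ¬ B ⊂ D) = Qset B₁ B₂ S := by
    ext A
    simp only [Qset, Finset.mem_filter]
    constructor
    · rintro ⟨⟨hA, -⟩, h⟩; exact ⟨hA, h⟩
    · rintro ⟨hA, h⟩
      refine ⟨⟨hA, fun hAD => ?_⟩, h⟩
      rcases hsplit A hA hAD with hc | hc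
      · exact h.1 (hc.trans hC1B)
      · exact h.2 (hc.trans hC2B)
  -- consequences of the type-P filter identity
  have hfilA : S.filter (fun A => A ⊂ D) = {C₁, C₂} →
      S.filter (fun A => A ⊂ C₁) = ∅ ∧ S.filter (fun A => A ⊂ C₂) = ∅ ∧ C₁ ∈ S ∧ C₂ ∈ S := by
    intro hfil
    have hmemf : ∀ A ∈ S, A ⊂ D → A = C₁ ∨ A = C₂ := by
      intro A hA hAD
      have : A ∈ S.filter (fun A => A ⊂ D) := Finset.mem_filter.mpr ⟨hA, hAD⟩
      rw [hfil] at this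
      simpa using this
    refine ⟨?_, ?_, ?_, ?_⟩
    · rw [Finset.filter_eq_empty_iff]
      intro A hA hAC
      rcases hmemf A hA (hAC.trans hC1D) with h | h
      · exact (ssubset_irrefl _) (h ▸ hAC)
      · exact hns21 (h ▸ hAC).1
    · rw [Finset.filter_eq_empty_iff]
      intro A hA hAC
      rcases hmemf A hA (hAC.trans hC2D) with h | h
      · exact hns12 (h ▸ hAC).1
      · exact (ssubset_irrefl _) (h ▸ hAC)
    · have : C₁ ∈ S.filter (fun A => A ⊂ D) := by rw [hfil]; simp
      exact (Finset.mem_filter.mp this).1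
    · have : C₂ ∈ S.filter (fun A => A ⊂ D) := by rw [hfil]; simp
      exact (Finset.mem_filter.mp this).1
  -- characterization of forward candidates
  have char_true : ∀ S'' : Finset (Finset (Fin n)),
      TypedCon B₁ B₂ S S'' → psiInv B₁ B₂ S = psiInv B₁ B₂ S'' →
      (C₁ ∈ S ∧ (∃ B ∈ S, B ⊂ C₁) ∧ S'' = S.erase C₁) ∨
      (C₂ ∈ S ∧ (∃ B ∈ S, B ⊂ C₂) ∧ S.filter (fun A => A ⊂ C₁) = ∅ ∧ S'' = S.erase C₂) ∨
      (S.filter (fun A => A ⊂ D) = {C₁, C₂} ∧ S'' = S.filter fun B => ¬ B ⊂ D) := by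
    intro S'' hcon hpsi
    rcases hcon with ⟨hexc, hfil⟩ | hq1 | hq2
    · exact Or.inr (Or.inr ⟨hfil, hexc.2.2⟩)
    · exact Or.inl ⟨hq1.1.1, hq1.1.2, hq1.2.2⟩
    · obtain ⟨⟨he₂, hint₂⟩, hneu, hS''⟩ := hq2
      refine Or.inr (Or.inl ⟨he₂, hint₂, ?_, hS''⟩)
      have hd : dLabel B₁ B₂ S'' = D := by
        rw [hS'']
        exact dLabel_congr (hQer C₂ (Or.inr hC2B))
      have h4 := psiInv_comp4 hpsi
      rw [hd, hS'', ← hDdef] at h4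
      rw [filter_erase_eq S C₂ (fun A => A ⊂ B₁ ∩ D) (fun hc => hns21 hc.1)] at h4
      have hk := card_filter_erase S C₂ (fun A => A ⊆ B₂ ∩ D) he₂ le_rfl
      rw [← hk] at h4
      set a := (S.filter fun A => A ⊂ B₁ ∩ D).card with hadef
      set m := ((S.erase C₂).filter fun A => A ⊆ B₂ ∩ D).card with hmdef
      have ha0 : a = 0 := by
        by_contra hc
        have hpos : 0 < a := Nat.pos_of_ne_zero hc
        have : a * m < a * (m + 1) := Nat.mul_lt_mul_of_pos_left (Nat.lt_succ_self m) hpos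
        omega
      rw [← Finset.card_eq_zero, ← hadef]
      exact ha0
  -- characterization of backward candidates
  have char_false : ∀ S'' : Finset (Finset (Fin n)),
      TypedCon B₁ B₂ S'' S → psiInv B₁ B₂ S'' = psiInv B₁ B₂ S →
      (C₁ ∉ S ∧ (∃ B ∈ S, B ⊂ C₁) ∧ S'' = insert C₁ S) ∨
      (C₂ ∉ S ∧ (∃ B ∈ S, B ⊂ C₂) ∧ S.filter (fun A => A ⊂ C₁) = ∅ ∧ S'' = insert C₂ S) ∨
      ((∀ B ∈ S, ¬ B ⊂ D) ∧ C₁ ∉ S ∧ C₂ ∉ S ∧ S'' = insert C₁ (insert C₂ S)) := by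
    intro S'' hcon hpsi
    rcases hcon with ⟨hexc, hfil⟩ | hq1 | hq2
    · -- backward type P
      obtain ⟨⟨hDS'', hDint''⟩, hleaf, hSfil⟩ := hexc
      have hSsub : S ⊆ S'' := by rw [hSfil]; exact Finset.filter_subset _ _
      have hQeq : Qset B₁ B₂ S'' = Qset B₁ B₂ S := by
        ext A
        simp only [Qset, Finset.mem_filter]
        constructor
        · rintro ⟨hA, hb⟩
          refine ⟨?_, hb⟩
          rw [hSfil, Finset.mem_filter]
          refine ⟨hA, fun hAD => ?_⟩
          have hmf : A ∈ S''.filter (fun B => B ⊂ dLabel B₁ B₂ S'') :=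
            Finset.mem_filter.mpr ⟨hA, hAD⟩
          rw [hfil, Finset.mem_insert, Finset.mem_singleton] at hmf
          rcases hmf with h | h
          · exact hb.1 (h ▸ Finset.inter_subset_left)
          · exact hb.2 (h ▸ Finset.inter_subset_left)
        · rintro ⟨hA, hb⟩; exact ⟨hSsub hA, hb⟩
      have hd : dLabel B₁ B₂ S'' = D := dLabel_congr hQeq
      rw [hd] at hfil hSfil
      have hemp : ∀ B ∈ S, ¬ B ⊂ D := by
        intro B hB
        rw [hSfil, Finset.mem_filter] at hB
        exact hB.2
      have hC1S'' : C₁ ∈ S'' := by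
        have : C₁ ∈ S''.filter (fun B => B ⊂ D) := by rw [hfil]; simp [hC1def]
        exact (Finset.mem_filter.mp this).1
      have hC2S'' : C₂ ∈ S'' := by
        have : C₂ ∈ S''.filter (fun B => B ⊂ D) := by rw [hfil]; simp [hC2def]
        exact (Finset.mem_filter.mp this).1
      refine Or.inr (Or.inr ⟨hemp, fun h => hemp C₁ h hC1D, fun h => hemp C₂ h hC2D, ?_⟩)
      ext A
      simp only [Finset.mem_insert]
      constructor
      · intro hA
        by_cases hAD : A ⊂ D
        · have : A ∈ S''.filter (fun B => B ⊂ D) := Finset.mem_filter.mpr ⟨hA, hAD⟩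
          rw [hfil, Finset.mem_insert, Finset.mem_singleton] at this
          rcases this with h | h
          · exact Or.inl h
          · exact Or.inr (Or.inl h)
        · refine Or.inr (Or.inr ?_)
          rw [hSfil, Finset.mem_filter]
          exact ⟨hA, hAD⟩
      · rintro (h | h | h)
        · exact h ▸ hC1S''
        · exact h ▸ hC2S''
        · exact hSsub h
    · -- backward type Q1
      obtain ⟨⟨hmem'', hint''⟩, hneu, hSer⟩ := hq1
      have hC''S : S'' = insert (B₁ ∩ dLabel B₁ B₂ S'') S := by
        rw [hSer]; exact (Finset.insert_erase hmem'').symm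
      have hd : dLabel B₁ B₂ S'' = D := by
        have h1 : Qset B₁ B₂ S'' = Qset B₁ B₂ S := by
          rw [hC''S]
          exact hQgen S _ (Or.inl Finset.inter_subset_left)
        exact dLabel_congr h1
      rw [hd] at hC''S hSer hint''
      refine Or.inl ⟨?_, ?_, hC''S⟩
      · rw [hSer]; exact Finset.notMem_erase _ _
      · obtain ⟨B, hB, hBC⟩ := hint''
        refine ⟨B, ?_, hBC⟩
        rw [hSer]
        exact Finset.mem_erase.mpr ⟨hBC.ne, hB⟩
    · -- backward type Q2
      obtain ⟨⟨hmem'', hint''⟩, hneu, hSer⟩ := hq2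
      have hC''S : S'' = insert (B₂ ∩ dLabel B₁ B₂ S'') S := by
        rw [hSer]; exact (Finset.insert_erase hmem'').symm
      have hd : dLabel B₁ B₂ S'' = D := by
        have h1 : Qset B₁ B₂ S'' = Qset B₁ B₂ S := by
          rw [hC''S]
          exact hQgen S _ (Or.inr Finset.inter_subset_left)
        exact dLabel_congr h1
      rw [hd] at hC''S hSer hint''
      have hC2nS : C₂ ∉ S := by rw [hSer]; exact Finset.notMem_erase _ _
      have hintS : ∃ B ∈ S, B ⊂ C₂ := by
        obtain ⟨B, hB, hBC⟩ := hint''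
        refine ⟨B, ?_, hBC⟩
        rw [hSer]
        exact Finset.mem_erase.mpr ⟨hBC.ne, hB⟩
      refine Or.inr (Or.inl ⟨hC2nS, hintS, ?_, hC''S⟩)
      have h4 := psiInv_comp4 hpsi
      rw [hd, hC''S, ← hDdef] at h4
      rw [filter_insert_eq S C₂ (fun A => A ⊂ B₁ ∩ D) (fun hc => hns21 hc.1)] at h4
      rw [card_filter_insert S C₂ (fun A => A ⊆ B₂ ∩ D) hC2nS le_rfl] at h4
      set a := (S.filter fun A => A ⊂ B₁ ∩ D).card with hadef
      set m := (S.filter fun A => A ⊆ B₂ ∩ D).card with hmdef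
      have ha0 : a = 0 := by
        by_contra hc
        have hpos : 0 < a := Nat.pos_of_ne_zero hc
        have : a * m < a * (m + 1) := Nat.mul_lt_mul_of_pos_left (Nat.lt_succ_self m) hpos
        omega
      rw [← Finset.card_eq_zero, ← hadef]
      exact ha0
  have hdisCset : C₁ ∩ C₂ = ∅ := by
    rw [Finset.eq_empty_iff_forall_notMem]
    intro x hx
    exact hdisC x (Finset.mem_inter.mp hx).1 (Finset.mem_inter.mp hx).2
  have hunCset : C₁ ∪ C₂ = D := by
    ext x
    simp only [Finset.mem_union]
    exact ⟨fun h => h.elim (fun h => hC1sD h) (fun h => hC2sD h), hunC x⟩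
  have hlamD : ∀ A ∈ S, A ∩ D = ∅ ∨ A ⊆ D ∨ D ⊆ A := fun A hA => hlam A hA D hDS
  -- MAIN CASE ANALYSIS
  by_cases ha : ∃ B ∈ S, B ⊂ C₁
  · -- side 1 has a proper subset
    have hane : S.filter (fun A => A ⊂ C₁) ≠ ∅ := by
      obtain ⟨B, hB, hBC⟩ := ha
      intro h
      rw [Finset.filter_eq_empty_iff] at h
      exact h hB hBC
    by_cases he₁ : C₁ ∈ S
    · -- designated: Q1 forward
      refine ⟨(true, S.erase C₁), ?_, ?_⟩
      · show TypedCon B₁ B₂ S _ ∧ IsIndexFam n _ ∧ psiInv B₁ B₂ S = psiInv B₁ B₂ _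
        refine ⟨Or.inr (Or.inl ?_), isIndexFam_erase hS he₁ ha hC1u, ?_⟩
        · unfold TypeQ1
          simp only [← hDdef, ← hC1def]
          exact ⟨⟨he₁, ha⟩, hC1u, rfl⟩
        · refine psiInv_eq ((dLabel_congr (hQer C₁ (Or.inl hC1B))).symm) ?_ ?_ ?_ ?_ <;>
            simp only [← hDdef, ← hC1def, ← hC2def]
          · rw [filter_erase_eq S C₁ (fun A => ¬ A ⊆ D) (not_not_intro hC1sD)]
          · rw [filter_erase_eq S C₁ (fun A => A ⊂ C₁) (fun hc => (ssubset_irrefl C₁) hc)]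
          · rw [filter_erase_eq S C₁ (fun A => A ⊂ C₁) (fun hc => (ssubset_irrefl C₁) hc),
              filter_erase_eq S C₁ (fun A => A ⊆ C₂) hns12]
          · rw [filter_erase_eq S C₁ (fun A => A ⊂ C₂) (fun hc => hns12 hc.1)]
      · rintro ⟨b, S''⟩ hq
        cases b
        · have hq' : TypedCon B₁ B₂ S'' S ∧ IsIndexFam n S'' ∧
              psiInv B₁ B₂ S'' = psiInv B₁ B₂ S := hq
          obtain ⟨hcon, hfam, hpsi⟩ := hq'
          rcases char_false S'' hcon hpsi with ⟨hn1, -, -⟩ | ⟨-, -, hf, -⟩ | ⟨hemp, -, -, -⟩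
          · exact absurd he₁ hn1
          · exact absurd hf hane
          · obtain ⟨B, hB, hBC⟩ := ha
            exact absurd (hBC.trans hC1D) (hemp B hB)
        · have hq' : TypedCon B₁ B₂ S S'' ∧ IsIndexFam n S'' ∧
              psiInv B₁ B₂ S = psiInv B₁ B₂ S'' := hq
          obtain ⟨hcon, hfam, hpsi⟩ := hq'
          rcases char_true S'' hcon hpsi with ⟨-, -, hS''⟩ | ⟨-, -, hf, -⟩ | ⟨hfil, -⟩
          · exact Prod.ext rfl hS''
          · exact absurd hf hane
          · exact absurd (hfilA hfil).1 hane
    · -- designated: Q1 backward (insert C₁)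
      have hd'' : dLabel B₁ B₂ (insert C₁ S) = D := by
        rw [hDdef]
        exact dLabel_congr (hQgen S C₁ (Or.inl hC1B))
      have hDint : ∃ B ∈ S, B ⊂ D := by
        obtain ⟨B, hB, hBC⟩ := ha
        exact ⟨B, hB, hBC.trans hC1D⟩
      have hupD : ∀ x : Fin n, x ∈ D ↔ ∃ B ∈ S, B ⊂ D ∧ x ∈ B := by
        rcases hcond D hDS with h | h
        · obtain ⟨B, hB, hBD⟩ := hDint; exact absurd hBD (h B hB)
        · exact h
      have hfam'' : IsIndexFam n (insert C₁ S) := by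
        refine isIndexFam_insert hS h1ne ?_ ?_ ?_
        · intro A hA
          rcases hlamD A hA with h | h | h
          · refine Or.inl (Finset.eq_empty_iff_forall_notMem.mpr fun x hx => ?_)
            have : x ∈ A ∩ D := Finset.mem_inter.mpr
              ⟨(Finset.mem_inter.mp hx).1, hC1sD (Finset.mem_inter.mp hx).2⟩
            rw [h] at this; exact absurd this (Finset.notMem_empty x)
          · rcases eq_or_lt_of_le h with h' | h'
            · exact Or.inr (Or.inr (h' ▸ hC1sD))
            · rcases hsplit A hA h' with hc | hc
              · exact Or.inr (Or.inl hc)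
              · refine Or.inl (Finset.eq_empty_iff_forall_notMem.mpr fun x hx => ?_)
                exact hdisC x (Finset.mem_inter.mp hx).2 (hc (Finset.mem_inter.mp hx).1)
          · exact Or.inr (Or.inr (hC1sD.trans h))
        · refine Or.inr fun x hx => ?_
          obtain ⟨B, hB, hBC, hxB⟩ := (hcov hDint).1 x hx
          exact ⟨B, hB, lt_of_le_of_ne hBC (fun h => he₁ (h ▸ hB)), hxB⟩
        · intro A hA hCA x
          have hAD : A = D ∨ D ⊂ A := by
            rcases hlamD A hA with h | h | h
            · exfalso
              obtain ⟨y, hy⟩ := h1ne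
              have : y ∈ A ∩ D := Finset.mem_inter.mpr ⟨hCA.1 hy, hC1sD hy⟩
              rw [h] at this; exact absurd this (Finset.notMem_empty y)
            · rcases eq_or_lt_of_le h with h' | h'
              · exact Or.inl h'
              · exfalso
                rcases hsplit A hA h' with hc | hc
                · exact hCA.2 hc
                · exact hns12 (hCA.1.trans hc)
            · rcases eq_or_lt_of_le h with h' | h'
              · exact Or.inl h'.symm
              · exact Or.inr h'
          rcases hAD with h | h
          · subst h; exact hupD x
          · rcases hcond A hA with h' | h'
            · exact absurd h (h' D hDS)
            · exact h' x
      refine ⟨(false, insert C₁ S), ?_, ?_⟩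
      · show TypedCon B₁ B₂ _ S ∧ IsIndexFam n _ ∧ psiInv B₁ B₂ _ = psiInv B₁ B₂ S
        refine ⟨Or.inr (Or.inl ?_), hfam'', ?_⟩
        · unfold TypeQ1
          rw [hd'', ← hC1def]
          refine ⟨⟨Finset.mem_insert_self _ _, ?_⟩, hC1u, (Finset.erase_insert he₁).symm⟩
          obtain ⟨B, hB, hBC⟩ := ha
          exact ⟨B, Finset.mem_insert_of_mem hB, hBC⟩
        · refine psiInv_eq (hd''.trans hDdef) ?_ ?_ ?_ ?_ <;>
            rw [hd''] <;> simp only [← hC1def, ← hC2def]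
          · rw [filter_insert_eq S C₁ (fun A => ¬ A ⊆ D) (not_not_intro hC1sD)]
          · rw [filter_insert_eq S C₁ (fun A => A ⊂ C₁) (fun hc => (ssubset_irrefl C₁) hc)]
          · rw [filter_insert_eq S C₁ (fun A => A ⊂ C₁) (fun hc => (ssubset_irrefl C₁) hc),
              filter_insert_eq S C₁ (fun A => A ⊆ C₂) hns12]
          · rw [filter_insert_eq S C₁ (fun A => A ⊂ C₂) (fun hc => hns12 hc.1)]
      · rintro ⟨b, S''⟩ hq
        cases b
        · have hq' : TypedCon B₁ B₂ S'' S ∧ IsIndexFam n S'' ∧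
              psiInv B₁ B₂ S'' = psiInv B₁ B₂ S := hq
          obtain ⟨hcon, hfam, hpsi⟩ := hq'
          rcases char_false S'' hcon hpsi with ⟨-, -, hS''⟩ | ⟨-, -, hf, -⟩ | ⟨hemp, -, -, -⟩
          · exact Prod.ext rfl hS''
          · exact absurd hf hane
          · obtain ⟨B, hB, hBC⟩ := ha
            exact absurd (hBC.trans hC1D) (hemp B hB)
        · have hq' : TypedCon B₁ B₂ S S'' ∧ IsIndexFam n S'' ∧
              psiInv B₁ B₂ S = psiInv B₁ B₂ S'' := hq
          obtain ⟨hcon, hfam, hpsi⟩ := hq'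
          rcases char_true S'' hcon hpsi with ⟨h1, -, -⟩ | ⟨-, -, hf, -⟩ | ⟨hfil, -⟩
          · exact absurd h1 he₁
          · exact absurd hf hane
          · exact absurd (hfilA hfil).1 hane
  · -- side 1 has no proper subset: a = 0
    have hae : S.filter (fun A => A ⊂ C₁) = ∅ :=
      Finset.filter_eq_empty_iff.mpr (fun {A} hA hAC => ha ⟨A, hA, hAC⟩)
    by_cases ha₂ : ∃ B ∈ S, B ⊂ C₂
    · -- side 2 has a proper subset
      have ha₂ne : S.filter (fun A => A ⊂ C₂) ≠ ∅ := by
        obtain ⟨B, hB, hBC⟩ := ha₂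
        intro h
        rw [Finset.filter_eq_empty_iff] at h
        exact h hB hBC
      by_cases he₂ : C₂ ∈ S
      · -- designated: Q2 forward
        refine ⟨(true, S.erase C₂), ?_, ?_⟩
        · show TypedCon B₁ B₂ S _ ∧ IsIndexFam n _ ∧ psiInv B₁ B₂ S = psiInv B₁ B₂ _
          refine ⟨Or.inr (Or.inr ?_), isIndexFam_erase hS he₂ ha₂ hC2u, ?_⟩
          · unfold TypeQ2
            simp only [← hDdef, ← hC2def]
            exact ⟨⟨he₂, ha₂⟩, hC2u, rfl⟩
          · refine psiInv_eq ((dLabel_congr (hQer C₂ (Or.inr hC2B))).symm) ?_ ?_ ?_ ?_ <;>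
              simp only [← hDdef, ← hC1def, ← hC2def]
            · rw [filter_erase_eq S C₂ (fun A => ¬ A ⊆ D) (not_not_intro hC2sD)]
            · rw [filter_erase_eq S C₂ (fun A => A ⊂ C₁) (fun hc => hns21 hc.1)]
            · rw [filter_erase_eq S C₂ (fun A => A ⊂ C₁) (fun hc => hns21 hc.1), hae]
              simp
            · rw [filter_erase_eq S C₂ (fun A => A ⊂ C₂) (fun hc => (ssubset_irrefl C₂) hc)]
        · rintro ⟨b, S''⟩ hq
          cases b
          · have hq' : TypedCon B₁ B₂ S'' S ∧ IsIndexFam n S'' ∧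
                psiInv B₁ B₂ S'' = psiInv B₁ B₂ S := hq
            obtain ⟨hcon, hfam, hpsi⟩ := hq'
            rcases char_false S'' hcon hpsi with ⟨-, hb, -⟩ | ⟨hn2, -, -, -⟩ | ⟨hemp, -, -, -⟩
            · exact absurd hb ha
            · exact absurd he₂ hn2
            · obtain ⟨B, hB, hBC⟩ := ha₂
              exact absurd (hBC.trans hC2D) (hemp B hB)
          · have hq' : TypedCon B₁ B₂ S S'' ∧ IsIndexFam n S'' ∧
                psiInv B₁ B₂ S = psiInv B₁ B₂ S'' := hq
            obtain ⟨hcon, hfam, hpsi⟩ := hq'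
            rcases char_true S'' hcon hpsi with ⟨-, hb, -⟩ | ⟨-, -, -, hS''⟩ | ⟨hfil, -⟩
            · exact absurd hb ha
            · exact Prod.ext rfl hS''
            · exact absurd (hfilA hfil).2.1 ha₂ne
      · -- designated: Q2 backward (insert C₂)
        have hd'' : dLabel B₁ B₂ (insert C₂ S) = D := by
          rw [hDdef]
          exact dLabel_congr (hQgen S C₂ (Or.inr hC2B))
        have hDint : ∃ B ∈ S, B ⊂ D := by
          obtain ⟨B, hB, hBC⟩ := ha₂
          exact ⟨B, hB, hBC.trans hC2D⟩
        have hupD : ∀ x : Fin n, x ∈ D ↔ ∃ B ∈ S, B ⊂ D ∧ x ∈ B := by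
          rcases hcond D hDS with h | h
          · obtain ⟨B, hB, hBD⟩ := hDint; exact absurd hBD (h B hB)
          · exact h
        have hfam'' : IsIndexFam n (insert C₂ S) := by
          refine isIndexFam_insert hS h2ne ?_ ?_ ?_
          · intro A hA
            rcases hlamD A hA with h | h | h
            · refine Or.inl (Finset.eq_empty_iff_forall_notMem.mpr fun x hx => ?_)
              have : x ∈ A ∩ D := Finset.mem_inter.mpr
                ⟨(Finset.mem_inter.mp hx).1, hC2sD (Finset.mem_inter.mp hx).2⟩
              rw [h] at this; exact absurd this (Finset.notMem_empty x)
            · rcases eq_or_lt_of_le h with h' | h'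
              · exact Or.inr (Or.inr (h' ▸ hC2sD))
              · rcases hsplit A hA h' with hc | hc
                · refine Or.inl (Finset.eq_empty_iff_forall_notMem.mpr fun x hx => ?_)
                  exact hdisC x (hc (Finset.mem_inter.mp hx).1) (Finset.mem_inter.mp hx).2
                · exact Or.inr (Or.inl hc)
            · exact Or.inr (Or.inr (hC2sD.trans h))
          · refine Or.inr fun x hx => ?_
            obtain ⟨B, hB, hBC, hxB⟩ := (hcov hDint).2 x hx
            exact ⟨B, hB, lt_of_le_of_ne hBC (fun h => he₂ (h ▸ hB)), hxB⟩
          · intro A hA hCA x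
            have hAD : A = D ∨ D ⊂ A := by
              rcases hlamD A hA with h | h | h
              · exfalso
                obtain ⟨y, hy⟩ := h2ne
                have : y ∈ A ∩ D := Finset.mem_inter.mpr ⟨hCA.1 hy, hC2sD hy⟩
                rw [h] at this; exact absurd this (Finset.notMem_empty y)
              · rcases eq_or_lt_of_le h with h' | h'
                · exact Or.inl h'
                · exfalso
                  rcases hsplit A hA h' with hc | hc
                  · exact hns21 (hCA.1.trans hc)
                  · exact hCA.2 hc
              · rcases eq_or_lt_of_le h with h' | h'
                · exact Or.inl h'.symm
                · exact Or.inr h'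
            rcases hAD with h | h
            · subst h; exact hupD x
            · rcases hcond A hA with h' | h'
              · exact absurd h (h' D hDS)
              · exact h' x
        refine ⟨(false, insert C₂ S), ?_, ?_⟩
        · show TypedCon B₁ B₂ _ S ∧ IsIndexFam n _ ∧ psiInv B₁ B₂ _ = psiInv B₁ B₂ S
          refine ⟨Or.inr (Or.inr ?_), hfam'', ?_⟩
          · unfold TypeQ2
            rw [hd'', ← hC2def]
            refine ⟨⟨Finset.mem_insert_self _ _, ?_⟩, hC2u, (Finset.erase_insert he₂).symm⟩
            obtain ⟨B, hB, hBC⟩ := ha₂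
            exact ⟨B, Finset.mem_insert_of_mem hB, hBC⟩
          · refine psiInv_eq (hd''.trans hDdef) ?_ ?_ ?_ ?_ <;>
              rw [hd''] <;> simp only [← hC1def, ← hC2def]
            · rw [filter_insert_eq S C₂ (fun A => ¬ A ⊆ D) (not_not_intro hC2sD)]
            · rw [filter_insert_eq S C₂ (fun A => A ⊂ C₁) (fun hc => hns21 hc.1)]
            · rw [filter_insert_eq S C₂ (fun A => A ⊂ C₁) (fun hc => hns21 hc.1), hae]
              simp
            · rw [filter_insert_eq S C₂ (fun A => A ⊂ C₂) (fun hc => (ssubset_irrefl C₂) hc)]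
        · rintro ⟨b, S''⟩ hq
          cases b
          · have hq' : TypedCon B₁ B₂ S'' S ∧ IsIndexFam n S'' ∧
                psiInv B₁ B₂ S'' = psiInv B₁ B₂ S := hq
            obtain ⟨hcon, hfam, hpsi⟩ := hq'
            rcases char_false S'' hcon hpsi with ⟨-, hb, -⟩ | ⟨-, -, -, hS''⟩ | ⟨hemp, -, -, -⟩
            · exact absurd hb ha
            · exact Prod.ext rfl hS''
            · obtain ⟨B, hB, hBC⟩ := ha₂
              exact absurd (hBC.trans hC2D) (hemp B hB)
          · have hq' : TypedCon B₁ B₂ S S'' ∧ IsIndexFam n S'' ∧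
                psiInv B₁ B₂ S = psiInv B₁ B₂ S'' := hq
            obtain ⟨hcon, hfam, hpsi⟩ := hq'
            rcases char_true S'' hcon hpsi with ⟨-, hb, -⟩ | ⟨h2S, -, -, -⟩ | ⟨hfil, -⟩
            · exact absurd hb ha
            · exact absurd h2S he₂
            · exact absurd (hfilA hfil).2.2.2 he₂
    · -- both sides have no proper subsets
      have hae₂ : S.filter (fun A => A ⊂ C₂) = ∅ :=
        Finset.filter_eq_empty_iff.mpr (fun {A} hA hAC => ha₂ ⟨A, hA, hAC⟩)
      by_cases hint : ∃ B ∈ S, B ⊂ D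
      · -- designated: P forward
        have he₁ : C₁ ∈ S := by
          obtain ⟨x, hx⟩ := h1ne
          obtain ⟨B, hB, hBC, -⟩ := (hcov hint).1 x hx
          rcases eq_or_lt_of_le hBC with h | h
          · exact h ▸ hB
          · exact absurd ⟨B, hB, h⟩ ha
        have he₂' : C₂ ∈ S := by
          obtain ⟨x, hx⟩ := h2ne
          obtain ⟨B, hB, hBC, -⟩ := (hcov hint).2 x hx
          rcases eq_or_lt_of_le hBC with h | h
          · exact h ▸ hB
          · exact absurd ⟨B, hB, h⟩ ha₂
        have hfil : S.filter (fun A => A ⊂ D) = {C₁, C₂} := by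
          ext A
          simp only [Finset.mem_filter, Finset.mem_insert, Finset.mem_singleton]
          constructor
          · rintro ⟨hA, hAD⟩
            rcases hsplit A hA hAD with h | h
            · rcases eq_or_lt_of_le h with h' | h'
              · exact Or.inl h'
              · exact absurd ⟨A, hA, h'⟩ ha
            · rcases eq_or_lt_of_le h with h' | h'
              · exact Or.inr h'
              · exact absurd ⟨A, hA, h'⟩ ha₂
          · rintro (h | h)
            · exact h ▸ ⟨he₁, hC1D⟩
            · exact h ▸ ⟨he₂', hC2D⟩
        have hf3 : (S.filter fun B => ¬ B ⊂ D).filter (fun A => A ⊂ C₁) = ∅ := by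
          rw [Finset.filter_eq_empty_iff]
          intro A hA hAC
          exact (Finset.mem_filter.mp hA).2 (hAC.trans hC1D)
        have hf5 : (S.filter fun B => ¬ B ⊂ D).filter (fun A => A ⊂ C₂) = ∅ := by
          rw [Finset.filter_eq_empty_iff]
          intro A hA hAC
          exact (Finset.mem_filter.mp hA).2 (hAC.trans hC2D)
        have hf2 : ((S.filter fun B => ¬ B ⊂ D).filter fun A => ¬ A ⊆ D)
            = S.filter fun A => ¬ A ⊆ D := by
          ext A
          simp only [Finset.mem_filter]
          exact ⟨fun h => ⟨h.1.1, h.2⟩, fun h => ⟨⟨h.1, fun hc => h.2 hc.1⟩, h.2⟩⟩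
        refine ⟨(true, S.filter fun B => ¬ B ⊂ D), ?_, ?_⟩
        · show TypedCon B₁ B₂ S _ ∧ IsIndexFam n _ ∧ psiInv B₁ B₂ S = psiInv B₁ B₂ _
          refine ⟨Or.inl ?_, isIndexFam_filter_not_ssubset hS hDS, ?_⟩
          · unfold TypeP
            simp only [← hDdef, ← hC1def, ← hC2def]
            refine ⟨⟨⟨hDS, C₁, he₁, hC1D⟩, ?_, rfl⟩, hfil⟩
            rintro B hB hBD ⟨hBS, B', hB', hB'B⟩
            have : B ∈ S.filter (fun A => A ⊂ D) := Finset.mem_filter.mpr ⟨hB, hBD⟩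
            rw [hfil, Finset.mem_insert, Finset.mem_singleton] at this
            rcases this with h | h
            · exact ha ⟨B', hB', h ▸ hB'B⟩
            · exact ha₂ ⟨B', hB', h ▸ hB'B⟩
          · refine psiInv_eq (dLabel_congr hQfil.symm) ?_ ?_ ?_ ?_ <;>
              simp only [← hDdef, ← hC1def, ← hC2def]
            · rw [hf2]
            · rw [hae, hf3]
            · rw [hae, hf3]; simp
            · rw [hae₂, hf5]
        · rintro ⟨b, S''⟩ hq
          cases b
          · have hq' : TypedCon B₁ B₂ S'' S ∧ IsIndexFam n S'' ∧
                psiInv B₁ B₂ S'' = psiInv B₁ B₂ S := hq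
            obtain ⟨hcon, hfam, hpsi⟩ := hq'
            rcases char_false S'' hcon hpsi with ⟨-, hb, -⟩ | ⟨-, hb, -, -⟩ | ⟨hemp, -, -, -⟩
            · exact absurd hb ha
            · exact absurd hb ha₂
            · obtain ⟨B, hB, hBD⟩ := hint
              exact absurd hBD (hemp B hB)
          · have hq' : TypedCon B₁ B₂ S S'' ∧ IsIndexFam n S'' ∧
                psiInv B₁ B₂ S = psiInv B₁ B₂ S'' := hq
            obtain ⟨hcon, hfam, hpsi⟩ := hq'
            rcases char_true S'' hcon hpsi with ⟨-, hb, -⟩ | ⟨-, hb, -, -⟩ | ⟨-, hS''⟩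
            · exact absurd hb ha
            · exact absurd hb ha₂
            · exact Prod.ext rfl hS''
      · -- designated: P backward
        have hemp : ∀ B ∈ S, ¬ B ⊂ D := fun B hB hBD => hint ⟨B, hB, hBD⟩
        have he₁n : C₁ ∉ S := fun h => hemp C₁ h hC1D
        have he₂n : C₂ ∉ S := fun h => hemp C₂ h hC2D
        have hd'' : dLabel B₁ B₂ (insert C₁ (insert C₂ S)) = D := by
          rw [hDdef]
          exact dLabel_congr ((hQgen (insert C₂ S) C₁ (Or.inl hC1B)).trans
            (hQgen S C₂ (Or.inr hC2B)))
        have hmem'' : ∀ {A : Finset (Fin n)}, A ∈ insert C₁ (insert C₂ S) ↔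
            A = C₁ ∨ A = C₂ ∨ A ∈ S := by
          intro A; simp [Finset.mem_insert]
        refine ⟨(false, insert C₁ (insert C₂ S)), ?_, ?_⟩
        · show TypedCon B₁ B₂ _ S ∧ IsIndexFam n _ ∧ psiInv B₁ B₂ _ = psiInv B₁ B₂ S
          refine ⟨Or.inl ?_,
            isIndexFam_Prev hS hDS hlamD hemp h1ne h2ne hC1D hC2D hdisCset hunCset, ?_⟩
          · unfold TypeP
            rw [hd'']
            simp only [← hC1def, ← hC2def]
            refine ⟨⟨⟨hmem''.mpr (Or.inr (Or.inr hDS)),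
              C₁, Finset.mem_insert_self _ _, hC1D⟩, ?_, ?_⟩, ?_⟩
            · rintro B hB hBD ⟨hBS, B', hB', hB'B⟩
              rcases hmem''.mp hB with h | h | h
              · rcases hmem''.mp hB' with h' | h' | h'
                · exact (ssubset_irrefl _) (h' ▸ h ▸ hB'B)
                · exact hns21 (h' ▸ h ▸ hB'B).1
                · exact hemp B' h' ((h ▸ hB'B : B' ⊂ C₁).trans hC1D)
              · rcases hmem''.mp hB' with h' | h' | h'
                · exact hns12 (h' ▸ h ▸ hB'B).1
                · exact (ssubset_irrefl _) (h' ▸ h ▸ hB'B)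
                · exact hemp B' h' ((h ▸ hB'B : B' ⊂ C₂).trans hC2D)
              · exact hemp B h hBD
            · ext A
              simp only [Finset.mem_filter]
              constructor
              · intro hA
                exact ⟨hmem''.mpr (Or.inr (Or.inr hA)), hemp A hA⟩
              · rintro ⟨hA, hnAD⟩
                rcases hmem''.mp hA with h | h | h
                · exact absurd (h ▸ hC1D) hnAD
                · exact absurd (h ▸ hC2D) hnAD
                · exact h
            · ext A
              simp only [Finset.mem_filter, Finset.mem_insert, Finset.mem_singleton]
              constructor
              · rintro ⟨hA, hAD⟩
                rcases hA with h | h | h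
                · exact Or.inl h
                · exact Or.inr h
                · exact absurd hAD (hemp A h)
              · rintro (h | h)
                · exact ⟨Or.inl h, h ▸ hC1D⟩
                · exact ⟨Or.inr (Or.inl h), h ▸ hC2D⟩
          · refine psiInv_eq (hd''.trans hDdef) ?_ ?_ ?_ ?_ <;>
              rw [hd''] <;> simp only [← hC1def, ← hC2def]
            · rw [filter_insert_eq _ C₁ (fun A => ¬ A ⊆ D) (not_not_intro hC1sD),
                filter_insert_eq S C₂ (fun A => ¬ A ⊆ D) (not_not_intro hC2sD)]
            · rw [filter_insert_eq _ C₁ (fun A => A ⊂ C₁) (fun hc => (ssubset_irrefl C₁) hc),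
                filter_insert_eq S C₂ (fun A => A ⊂ C₁) (fun hc => hns21 hc.1)]
            · rw [filter_insert_eq _ C₁ (fun A => A ⊂ C₁) (fun hc => (ssubset_irrefl C₁) hc),
                filter_insert_eq S C₂ (fun A => A ⊂ C₁) (fun hc => hns21 hc.1), hae]
              simp
            · rw [filter_insert_eq _ C₁ (fun A => A ⊂ C₂) (fun hc => hns12 hc.1),
                filter_insert_eq S C₂ (fun A => A ⊂ C₂) (fun hc => (ssubset_irrefl C₂) hc)]
        · rintro ⟨b, S''⟩ hq
          cases b
          · have hq' : TypedCon B₁ B₂ S'' S ∧ IsIndexFam n S'' ∧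
                psiInv B₁ B₂ S'' = psiInv B₁ B₂ S := hq
            obtain ⟨hcon, hfam, hpsi⟩ := hq'
            rcases char_false S'' hcon hpsi with ⟨-, hb, -⟩ | ⟨-, hb, -, -⟩ | ⟨-, -, -, hS''⟩
            · exact absurd hb ha
            · exact absurd hb ha₂
            · exact Prod.ext rfl hS''
          · have hq' : TypedCon B₁ B₂ S S'' ∧ IsIndexFam n S'' ∧
                psiInv B₁ B₂ S = psiInv B₁ B₂ S'' := hq
            obtain ⟨hcon, hfam, hpsi⟩ := hq'
            rcases char_true S'' hcon hpsi with ⟨-, hb, -⟩ | ⟨-, hb, -, -⟩ | ⟨hfil, -⟩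
            · exact absurd hb ha
            · exact absurd hb ha₂
            · exact absurd (hfilA hfil).2.2.1 he₁n
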